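/- arXiv:0912.4064 — 7 statements merged into one kernel-verified Lean document; each statement's English description precedes it below -/
import Mathlib

section
/- Let n ≥ 2, let U ⊆ ℝⁿ be open, and let Ψ : U → ℝⁿ be a smooth map which is a diffeomorphism onto its image. Suppose that for every p ∈ U and every r > 0 such that the closed ball of centre p and radius r is contained in U, the image Ψ({ x : ‖x − p‖ = r }) is a Euclidean sphere, i.e. equals { y ∈ ℝⁿ : ‖y − c‖ = ρ } for some c ∈ ℝⁿ and ρ > 0. Then Ψ is conformal at every point of U, i.e. at each p ∈ U the differential DΨ_p is a nonzero scalar multiple of a linear isometry of ℝⁿ. -/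
noncomputable section
set_option maxHeartbeats 1000000

open RealInnerProductSpace

lemma key_ineq {E : Type*} [NormedAddCommGroup E] [InnerProductSpace ℝ E]
    (d s e₁ e₂ : E) (ρ r ε M : ℝ) (hr : 0 < r) (hε : 0 ≤ ε) (hε1 : ε ≤ 1) (hM : 0 ≤ M)
    (hp1 : ‖s + e₁ - d‖ = ρ) (hp2 : ‖-s + e₂ - d‖ = ρ)
    (hE₁ : ‖e₁‖ ≤ ε*r) (hE₂ : ‖e₂‖ ≤ ε*r) (hd : ‖d‖ ≤ 2*(M+ε)*r) (hs : ‖s‖ ≤ M*r) :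
    |ρ^2 - ‖d‖^2 - ‖s‖^2| ≤ (6*M+5)*ε*r^2 := by
  have e1 : ρ^2 = ‖s + e₁‖^2 - 2*⟪s + e₁, d⟫ + ‖d‖^2 := by
    rw [← hp1, norm_sub_sq_real]
  have e2 : ρ^2 = ‖-s + e₂‖^2 - 2*⟪-s + e₂, d⟫ + ‖d‖^2 := by
    rw [← hp2, norm_sub_sq_real]
  have n1 : ‖s + e₁‖^2 = ‖s‖^2 + 2*⟪s, e₁⟫ + ‖e₁‖^2 := norm_add_sq_real s e₁
  have n2 : ‖-s + e₂‖^2 = ‖e₂‖^2 - 2*⟪e₂, s⟫ + ‖s‖^2 := by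
    rw [show -s + e₂ = e₂ - s by abel, norm_sub_sq_real]
  have i1 : ⟪s + e₁, d⟫ = ⟪s, d⟫ + ⟪e₁, d⟫ := inner_add_left _ _ _
  have i2 : ⟪-s + e₂, d⟫ = -⟪s, d⟫ + ⟪e₂, d⟫ := by
    rw [inner_add_left, inner_neg_left]
  have key : ρ^2 - ‖d‖^2 - ‖s‖^2
      = ⟪s, e₁⟫ - ⟪e₂, s⟫ + (‖e₁‖^2 + ‖e₂‖^2)/2 - ⟪e₁, d⟫ - ⟪e₂, d⟫ := by
    linarith [e1, e2, n1, n2, i1, i2]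
  have hn1 : (0:ℝ) ≤ ‖e₁‖ := norm_nonneg _
  have hn2 : (0:ℝ) ≤ ‖e₂‖ := norm_nonneg _
  have hn3 : (0:ℝ) ≤ ‖s‖ := norm_nonneg _
  have hn4 : (0:ℝ) ≤ ‖d‖ := norm_nonneg _
  have her : (0:ℝ) ≤ ε*r := by positivity
  have b1 : |⟪s, e₁⟫| ≤ M*r*(ε*r) :=
    (abs_real_inner_le_norm _ _).trans (mul_le_mul hs hE₁ hn1 (by positivity))
  have b2 : |⟪e₂, s⟫| ≤ ε*r*(M*r) :=
    (abs_real_inner_le_norm _ _).trans (mul_le_mul hE₂ hs hn3 her)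
  have b3 : |⟪e₁, d⟫| ≤ ε*r*(2*(M+ε)*r) :=
    (abs_real_inner_le_norm _ _).trans (mul_le_mul hE₁ hd hn4 her)
  have b4 : |⟪e₂, d⟫| ≤ ε*r*(2*(M+ε)*r) :=
    (abs_real_inner_le_norm _ _).trans (mul_le_mul hE₂ hd hn4 her)
  have b5 : ‖e₁‖^2 ≤ (ε*r)^2 := pow_le_pow_left₀ hn1 hE₁ 2
  have b6 : ‖e₂‖^2 ≤ (ε*r)^2 := pow_le_pow_left₀ hn2 hE₂ 2
  have hee : ε*ε ≤ ε := mul_le_of_le_one_right hε hε1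
  rw [key]
  have h1 : |⟪s, e₁⟫ - ⟪e₂, s⟫ + (‖e₁‖^2 + ‖e₂‖^2)/2 - ⟪e₁, d⟫ - ⟪e₂, d⟫|
      ≤ 2*(M*r*(ε*r)) + (ε*r)^2 + 2*(ε*r*(2*(M+ε)*r)) := by
    have B1 := abs_le.mp b1; have B2 := abs_le.mp b2
    have B3 := abs_le.mp b3; have B4 := abs_le.mp b4
    rw [abs_le]
    constructor <;> linarith [sq_nonneg (ε*r), sq_nonneg ‖e₁‖, sq_nonneg ‖e₂‖]
  refine h1.trans ?_
  nlinarith [mul_le_mul_of_nonneg_right hee (sq_nonneg r)]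

/-- A cospherical diffeomorphism of a Euclidean open set (one mapping every Euclidean
sphere contained in `U` to a Euclidean sphere) is conformal at every point. -/
theorem cospherical_implies_conformal {n : ℕ} (hn : 2 ≤ n)
    (U : Set (EuclideanSpace ℝ (Fin n))) (hU : IsOpen U)
    (Ψ : EuclideanSpace ℝ (Fin n) → EuclideanSpace ℝ (Fin n))
    (hΨ : ContDiffOn ℝ (⊤ : ℕ∞) Ψ U)
    (hinj : Set.InjOn Ψ U)
    (hdiffeo : ∀ p ∈ U, Function.Bijective (fderiv ℝ Ψ p))
    (hsph : ∀ p ∈ U, ∀ r : ℝ, 0 < r → Metric.closedBall p r ⊆ U →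
      ∃ (c : EuclideanSpace ℝ (Fin n)) (ρ : ℝ), 0 < ρ ∧
        Ψ '' {x | ‖x - p‖ = r} = {y | ‖y - c‖ = ρ}) :
    ∀ p ∈ U, ∃ (k : ℝ) (L : EuclideanSpace ℝ (Fin n) →ₗᵢ[ℝ] EuclideanSpace ℝ (Fin n)),
      k ≠ 0 ∧ ∀ v, fderiv ℝ Ψ p v = k • L v := by
  intro p hp
  have hE : True := trivial
  set A : EuclideanSpace ℝ (Fin n) →L[ℝ] EuclideanSpace ℝ (Fin n) := fderiv ℝ Ψ p with hA
  -- differentiability at p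
  have hdiffat : DifferentiableAt ℝ Ψ p :=
    ((hΨ.differentiableOn (by simp)) p hp).differentiableAt (hU.mem_nhds hp)
  have hder : HasFDerivAt Ψ A p := hdiffat.hasFDerivAt
  have hlo : (fun h : EuclideanSpace ℝ (Fin n) => Ψ (p + h) - Ψ p - A h) =o[nhds 0] fun h => h :=
    hasFDerivAt_iff_isLittleO_nhds_zero.mp hder
  set e : EuclideanSpace ℝ (Fin n) → EuclideanSpace ℝ (Fin n) := fun h => Ψ (p + h) - Ψ p - A h with he
  set M : ℝ := ‖A‖ with hM
  have hM0 : 0 ≤ M := norm_nonneg _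
  -- Main claim: ‖A u‖ = ‖A v‖ for all unit vectors u, v
  have claim : ∀ u v : EuclideanSpace ℝ (Fin n), ‖u‖ = 1 → ‖v‖ = 1 → ‖A u‖ = ‖A v‖ := by
    intro u v hu hv
    have main : ∀ δ : ℝ, 0 < δ → |‖A u‖^2 - ‖A v‖^2| ≤ δ := by
      intro δ hδ
      set ε : ℝ := min 1 (δ / (12*M + 11)) with hεdef
      have hεpos : 0 < ε := lt_min one_pos (by positivity)
      have hε1 : ε ≤ 1 := min_le_left _ _
      have hεδ : (12*M + 11) * ε ≤ δ := by
        have h2 : ε ≤ δ / (12*M + 11) := min_le_right _ _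
        have h3 : (0:ℝ) < 12*M + 11 := by positivity
        calc (12*M + 11) * ε ≤ (12*M + 11) * (δ / (12*M + 11)) := by
              exact mul_le_mul_of_nonneg_left h2 h3.le
          _ = δ := by field_simp
      -- little-o bound
      obtain ⟨r₁, hr₁, hball⟩ := Metric.eventually_nhds_iff.mp (hlo.def hεpos)
      obtain ⟨r₂, hr₂, hball₂⟩ := Metric.isOpen_iff.mp hU p hp
      set r : ℝ := min (r₁/2) (r₂/2) with hrdef
      have hr : 0 < r := lt_min (by linarith) (by linarith)
      have hrr₁ : r < r₁ := (min_le_left _ _).trans_lt (by linarith)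
      have hsub : Metric.closedBall p r ⊆ U :=
        (Metric.closedBall_subset_ball ((min_le_right _ _).trans_lt (by linarith))).trans hball₂
      obtain ⟨c, ρ, hρ, himg⟩ := hsph p hp r hr hsub
      set d : EuclideanSpace ℝ (Fin n) := c - Ψ p with hd
      -- little-o bound at radius r
      have heb : ∀ h : EuclideanSpace ℝ (Fin n), ‖h‖ = r → ‖e h‖ ≤ ε * r := by
        intro h hh
        have : dist h 0 < r₁ := by rw [dist_zero_right, hh]; exact hrr₁
        have := hball this
        rwa [hh] at this
      -- sphere membership
      have hmem : ∀ w : EuclideanSpace ℝ (Fin n), ‖w‖ = 1 → ‖r • A w + e (r • w) - d‖ = ρ := by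
        intro w hw
        have hxw : ‖(p + r • w) - p‖ = r := by
          simp [norm_smul, hw, abs_of_pos hr]
        have h1 : Ψ (p + r • w) ∈ Ψ '' {x | ‖x - p‖ = r} :=
          Set.mem_image_of_mem _ hxw
        rw [himg] at h1
        have h2 : ‖Ψ (p + r • w) - c‖ = ρ := h1
        have h3 : Ψ (p + r • w) - c = r • A w + e (r • w) - d := by
          have : e (r • w) = Ψ (p + r • w) - Ψ p - A (r • w) := rfl
          rw [this, map_smul]
          simp only [hd]
          abel
        rwa [h3] at h2
      -- bound on distance from Ψ p for image points of the sphere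
      have himgb : ∀ h : EuclideanSpace ℝ (Fin n), ‖h‖ = r → ‖Ψ (p + h) - Ψ p‖ ≤ (M + ε) * r := by
        intro h hh
        have h1 : Ψ (p + h) - Ψ p = A h + e h := by
          have : e h = Ψ (p + h) - Ψ p - A h := rfl
          rw [this]; abel
        rw [h1]
        calc ‖A h + e h‖ ≤ ‖A h‖ + ‖e h‖ := norm_add_le _ _
          _ ≤ M * ‖h‖ + ε * r := add_le_add (A.le_opNorm h) (heb h hh)
          _ = (M + ε) * r := by rw [hh]; ring
      -- bound ρ via antipodal point
      have hub : ∀ w : EuclideanSpace ℝ (Fin n), ‖w‖ = 1 → ‖Ψ (p + r • w) - Ψ p‖ ≤ (M + ε) * r := by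
        intro w hw
        exact himgb (r • w) (by simp [norm_smul, hw, abs_of_pos hr])
      have hρb : ρ ≤ (M + ε) * r := by
        set y := Ψ (p + r • u) with hy
        have hyc : ‖y - c‖ = ρ := by
          have hxw : ‖(p + r • u) - p‖ = r := by simp [norm_smul, hu, abs_of_pos hr]
          have h1 : y ∈ Ψ '' {x | ‖x - p‖ = r} := Set.mem_image_of_mem _ hxw
          rw [himg] at h1; exact h1
        set y' := c + (c - y) with hy'
        have hy'c : ‖y' - c‖ = ρ := by
          have : y' - c = c - y := by rw [hy']; abel
          rw [this, norm_sub_rev]; exact hyc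
        have h1 : y' ∈ Ψ '' {x | ‖x - p‖ = r} := by rw [himg]; exact hy'c
        obtain ⟨x', hx', hΨx'⟩ := h1
        have hx'r : ‖x' - p‖ = r := hx'
        have hx'b : ‖Ψ x' - Ψ p‖ ≤ (M + ε) * r := by
          have hxx : p + (x' - p) = x' := by abel
          have h6 := himgb (x' - p) hx'r
          rwa [hxx] at h6
        have hyy' : ‖y - y'‖ = 2 * ρ := by
          have h2 : y - y' = (2:ℝ) • (y - c) := by
            rw [hy']; module
          rw [h2, norm_smul, hyc]
          simp
        have : ‖y - y'‖ ≤ ‖y - Ψ p‖ + ‖Ψ p - y'‖ := norm_sub_le_norm_sub_add_norm_sub _ _ _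
        rw [hyy'] at this
        have hub2 : ‖y - Ψ p‖ ≤ (M + ε) * r := hub u hu
        have hub3 : ‖Ψ p - y'‖ ≤ (M + ε) * r := by
          rw [norm_sub_rev, ← hΨx']; exact hx'b
        linarith
      have hdb : ‖d‖ ≤ 2 * (M + ε) * r := by
        have hyc : ‖Ψ (p + r • u) - c‖ = ρ := by
          have hxw : ‖(p + r • u) - p‖ = r := by simp [norm_smul, hu, abs_of_pos hr]
          have h1 : Ψ (p + r • u) ∈ Ψ '' {x | ‖x - p‖ = r} := Set.mem_image_of_mem _ hxw
          rw [himg] at h1; exact h1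
        have hcn : ‖c - Ψ (p + r • u)‖ = ρ := by rw [norm_sub_rev]; exact hyc
        have hdd : d = (c - Ψ (p + r • u)) + (Ψ (p + r • u) - Ψ p) := by
          rw [hd]; abel
        have hle : ‖d‖ ≤ ‖c - Ψ (p + r • u)‖ + ‖Ψ (p + r • u) - Ψ p‖ := by
          rw [hdd]; exact norm_add_le _ _
        rw [hcn] at hle
        linarith [hub u hu, hρb]
      -- apply key inequality for u and for v
      have happ : ∀ w : EuclideanSpace ℝ (Fin n), ‖w‖ = 1 →
          |ρ^2 - ‖d‖^2 - r^2 * ‖A w‖^2| ≤ (6*M+5)*ε*r^2 := by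
        intro w hw
        have hs1 : ‖r • A w + e (r • w) - d‖ = ρ := hmem w hw
        have hs2 : ‖-(r • A w) + e (r • (-w)) - d‖ = ρ := by
          have := hmem (-w) (by rwa [norm_neg])
          rwa [map_neg, smul_neg] at this
        have hE1 : ‖e (r • w)‖ ≤ ε * r :=
          heb _ (by simp [norm_smul, hw, abs_of_pos hr])
        have hE2 : ‖e (r • (-w))‖ ≤ ε * r :=
          heb _ (by simp [norm_smul, hw, abs_of_pos hr])
        have hsb : ‖r • A w‖ ≤ M * r := by
          rw [norm_smul, Real.norm_eq_abs, abs_of_pos hr]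
          calc r * ‖A w‖ ≤ r * (M * ‖w‖) := by
                exact mul_le_mul_of_nonneg_left (A.le_opNorm w) hr.le
            _ = M * r := by rw [hw]; ring
        have := key_ineq d (r • A w) (e (r • w)) (e (r • (-w))) ρ r ε M
          hr hεpos.le hε1 hM0 hs1 hs2 hE1 hE2 hdb hsb
        have hns : ‖r • A w‖^2 = r^2 * ‖A w‖^2 := by
          rw [norm_smul, Real.norm_eq_abs, abs_of_pos hr, mul_pow]
        rwa [hns] at this
      have h1 := happ u hu
      have h2 := happ v hv
      -- combine
      have h3 : |r^2 * ‖A u‖^2 - r^2 * ‖A v‖^2| ≤ (12*M+10)*ε*r^2 := by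
        have B1 := abs_le.mp h1
        have B2 := abs_le.mp h2
        rw [abs_le]
        constructor <;> linarith [B1.1, B1.2, B2.1, B2.2]
      have hr2 : (0:ℝ) < r^2 := by positivity
      have h4 : |‖A u‖^2 - ‖A v‖^2| * r^2 ≤ (12*M+10)*ε*r^2 := by
        calc |‖A u‖^2 - ‖A v‖^2| * r^2 = |(‖A u‖^2 - ‖A v‖^2) * r^2| := by
              rw [abs_mul, abs_of_pos hr2]
          _ = |r^2 * ‖A u‖^2 - r^2 * ‖A v‖^2| := by
              rw [show (‖A u‖^2 - ‖A v‖^2) * r^2 = r^2 * ‖A u‖^2 - r^2 * ‖A v‖^2 from by ring]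
          _ ≤ (12*M+10)*ε*r^2 := h3
      have h5 : |‖A u‖^2 - ‖A v‖^2| ≤ (12*M+10)*ε :=
        le_of_mul_le_mul_right (by linarith [h4]) hr2
      calc |‖A u‖^2 - ‖A v‖^2| ≤ (12*M+10)*ε := h5
        _ ≤ (12*M+11)*ε := by
              have : (12*M+10) ≤ (12*M+11) := by linarith
              exact mul_le_mul_of_nonneg_right this hεpos.le
        _ ≤ δ := hεδ
    -- conclude equality
    have h0 : ‖A u‖^2 = ‖A v‖^2 := by
      by_contra hne
      have habs : 0 < |‖A u‖^2 - ‖A v‖^2| := abs_pos.mpr (sub_ne_zero.mpr hne)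
      have := main (|‖A u‖^2 - ‖A v‖^2| / 2) (by linarith)
      linarith
    nlinarith [norm_nonneg (A u), norm_nonneg (A v)]
  -- construct the isometry
  set w₀ : EuclideanSpace ℝ (Fin n) := EuclideanSpace.single (⟨0, by omega⟩ : Fin n) (1:ℝ) with hw₀def
  have hw₀ : ‖w₀‖ = 1 := by simp [hw₀def, EuclideanSpace.norm_single]
  set k : ℝ := ‖A w₀‖ with hk
  have hkpos : 0 < k := by
    rw [hk, norm_pos_iff]
    intro hAw
    have : w₀ = 0 := (hdiffeo p hp).1 (by simpa using hAw)
    rw [this] at hw₀; simp at hw₀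
  have hAll : ∀ x : EuclideanSpace ℝ (Fin n), ‖A x‖ = k * ‖x‖ := by
    intro x
    rcases eq_or_ne x 0 with rfl | hx
    · simp
    · have hxn : ‖x‖ ≠ 0 := norm_ne_zero_iff.mpr hx
      set w : EuclideanSpace ℝ (Fin n) := ‖x‖⁻¹ • x with hw
      have hwn : ‖w‖ = 1 := by
        rw [hw, norm_smul, norm_inv, norm_norm, inv_mul_cancel₀ hxn]
      have hxw : x = ‖x‖ • w := by rw [hw, smul_smul, mul_inv_cancel₀ hxn, one_smul]
      rw [hxw, map_smul, norm_smul, norm_norm, claim w w₀ hwn hw₀,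
        norm_smul, norm_norm, hwn, mul_one]
      ring
  refine ⟨k, ⟨(k⁻¹ • A).toLinearMap, fun x => ?_⟩, ne_of_gt hkpos, fun v => ?_⟩
  · show ‖(k⁻¹ • A) x‖ = ‖x‖
    rw [ContinuousLinearMap.smul_apply, norm_smul, hAll, Real.norm_eq_abs, abs_inv,
      abs_of_pos hkpos]
    field_simp
  · show A v = k • (k⁻¹ • A v)
    rw [smul_smul, mul_inv_cancel₀ (ne_of_gt hkpos), one_smul]
end
end

section
/- Let U ⊆ ℝ² be open and connected, and let a, b, k : U → ℝ be smooth functions satisfying on all of U the four equations k = −∂₁b, ∂₂b = 2·∂₁a, ∂₁a = 2·∂₂b, and k = −∂₂a, where ∂₁ and ∂₂ denote the partial derivatives with respect to the first and second coordinate. Then k is constant on U. -/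
noncomputable section

/-- Partial derivative with respect to the first coordinate of a function on `ℝ²`. -/
def pd1 (f : ℝ × ℝ → ℝ) (x : ℝ × ℝ) : ℝ := fderiv ℝ f x (1, 0)

/-- Partial derivative with respect to the second coordinate of a function on `ℝ²`. -/
def pd2 (f : ℝ × ℝ → ℝ) (x : ℝ × ℝ) : ℝ := fderiv ℝ f x (0, 1)

/-- Derivative of a directional derivative, expressed via the second derivative. -/
lemma fderiv_dir_apply (f : ℝ × ℝ → ℝ) (x v w : ℝ × ℝ)
    (hf : DifferentiableAt ℝ (fderiv ℝ f) x) :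
    fderiv ℝ (fun y => fderiv ℝ f y v) x w = fderiv ℝ (fderiv ℝ f) x w v := by
  rw [fderiv_clm_apply hf (differentiableAt_const v)]
  simp

lemma diffAt_fderiv {f : ℝ × ℝ → ℝ} {x : ℝ × ℝ} {U : Set (ℝ × ℝ)} (hU : IsOpen U) (hx : x ∈ U)
    (hf : ContDiffOn ℝ (⊤ : ℕ∞) f U) : DifferentiableAt ℝ (fderiv ℝ f) x := by
  have h := hf.contDiffAt (hU.mem_nhds hx)
  have h2 : ContDiffAt ℝ 1 (fderiv ℝ f) x := h.fderiv_right (WithTop.coe_le_coe.mpr le_top)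
  exact h2.differentiableAt one_ne_zero

/-- Flat case of the two-dimensional infinitesimal Beltrami theorem, in coordinates:
if `k = −∂₁b`, `∂₂b = 2∂₁a`, `∂₁a = 2∂₂b` and `k = −∂₂a` on an open connected set,
then `k` is constant. -/
theorem infinitesimal_beltrami_flat
    (U : Set (ℝ × ℝ)) (hU : IsOpen U) (hconn : IsConnected U)
    (a b k : ℝ × ℝ → ℝ)
    (ha : ContDiffOn ℝ (⊤ : ℕ∞) a U) (hb : ContDiffOn ℝ (⊤ : ℕ∞) b U)
    (hk : ContDiffOn ℝ (⊤ : ℕ∞) k U)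
    (h1 : ∀ x ∈ U, k x = -pd1 b x)
    (h2 : ∀ x ∈ U, pd2 b x = 2 * pd1 a x)
    (h3 : ∀ x ∈ U, pd1 a x = 2 * pd2 b x)
    (h4 : ∀ x ∈ U, k x = -pd2 a x) :
    ∀ x ∈ U, ∀ y ∈ U, k x = k y := by
  -- From h2 and h3, both pd2 b and pd1 a vanish on U.
  have hb2 : ∀ x ∈ U, pd2 b x = 0 := by
    intro x hx
    have e1 := h2 x hx; have e2 := h3 x hx
    linarith
  have ha1 : ∀ x ∈ U, pd1 a x = 0 := by
    intro x hx
    have e2 := h3 x hx; have := hb2 x hx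
    linarith
  -- The derivative of k vanishes on U.
  have hderiv : ∀ x ∈ U, fderiv ℝ k x = 0 := by
    intro x hx
    have hmem : U ∈ nhds x := hU.mem_nhds hx
    have hbd : DifferentiableAt ℝ (fderiv ℝ b) x := diffAt_fderiv hU hx hb
    have had : DifferentiableAt ℝ (fderiv ℝ a) x := diffAt_fderiv hU hx ha
    have hbsym : IsSymmSndFDerivAt ℝ b x :=
      (hb.contDiffAt hmem).isSymmSndFDerivAt
        (by rw [minSmoothness_of_isRCLikeNormedField]; exact WithTop.coe_le_coe.mpr le_top)
    have hasym : IsSymmSndFDerivAt ℝ a x :=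
      (ha.contDiffAt hmem).isSymmSndFDerivAt
        (by rw [minSmoothness_of_isRCLikeNormedField]; exact WithTop.coe_le_coe.mpr le_top)
    -- fderiv of pd2 b vanishes at x since pd2 b = 0 near x
    have hb20 : fderiv ℝ (pd2 b) x = 0 := by
      have heq : pd2 b =ᶠ[nhds x] (fun _ => (0:ℝ)) := by
        filter_upwards [hmem] with y hy using hb2 y hy
      rw [heq.fderiv_eq, fderiv_fun_const]
      rfl
    have ha10 : fderiv ℝ (pd1 a) x = 0 := by
      have heq : pd1 a =ᶠ[nhds x] (fun _ => (0:ℝ)) := by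
        filter_upwards [hmem] with y hy using ha1 y hy
      rw [heq.fderiv_eq, fderiv_fun_const]
      rfl
    -- k = -pd1 b near x, and k = -pd2 a near x
    have hk1 : fderiv ℝ k x = -(fderiv ℝ (pd1 b) x) := by
      have heq : k =ᶠ[nhds x] (fun y => -(pd1 b y)) := by
        filter_upwards [hmem] with y hy using h1 y hy
      rw [heq.fderiv_eq, fderiv_fun_neg]
    have hk2 : fderiv ℝ k x = -(fderiv ℝ (pd2 a) x) := by
      have heq : k =ᶠ[nhds x] (fun y => -(pd2 a y)) := by
        filter_upwards [hmem] with y hy using h4 y hy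
      rw [heq.fderiv_eq, fderiv_fun_neg]
    -- evaluate on the basis
    have e01 : fderiv ℝ k x (0, 1) = 0 := by
      rw [hk1]
      have : fderiv ℝ (pd1 b) x (0, 1) = fderiv ℝ (fderiv ℝ b) x (0, 1) (1, 0) :=
        fderiv_dir_apply b x (1, 0) (0, 1) hbd
      rw [ContinuousLinearMap.neg_apply, this, hbsym.eq (0,1) (1,0),
        ← fderiv_dir_apply b x (0, 1) (1, 0) hbd]
      have : (fun y => fderiv ℝ b y (0, 1)) = pd2 b := rfl
      rw [this, hb20]
      simp
    have e10 : fderiv ℝ k x (1, 0) = 0 := by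
      rw [hk2]
      have : fderiv ℝ (pd2 a) x (1, 0) = fderiv ℝ (fderiv ℝ a) x (1, 0) (0, 1) :=
        fderiv_dir_apply a x (0, 1) (1, 0) had
      rw [ContinuousLinearMap.neg_apply, this, hasym.eq (1,0) (0,1),
        ← fderiv_dir_apply a x (1, 0) (0, 1) had]
      have : (fun y => fderiv ℝ a y (1, 0)) = pd1 a := rfl
      rw [this, ha10]
      simp
    ext
    · simpa using e10
    · simpa using e01
  -- local constancy of k on U
  have hloc : ∀ z ∈ U, ∃ ε > 0, Metric.ball z ε ⊆ U ∧
      ∀ w ∈ Metric.ball z ε, k w = k z := by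
    intro z hz
    obtain ⟨ε, hε, hball⟩ := Metric.isOpen_iff.1 hU z hz
    refine ⟨ε, hε, hball, fun w hw => ?_⟩
    have hconv : Convex ℝ (Metric.ball z ε) := convex_ball z ε
    have hdiff : DifferentiableOn ℝ k (Metric.ball z ε) := fun y hy =>
      (((hk.mono hball).contDiffAt (Metric.isOpen_ball.mem_nhds hy)).differentiableAt
        (by simp)).differentiableWithinAt
    refine hconv.is_const_of_fderivWithin_eq_zero hdiff (fun y hy => ?_) hw
      (Metric.mem_ball_self hε)
    rw [fderivWithin_of_isOpen Metric.isOpen_ball hy]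
    exact hderiv y (hball hy)
  -- clopen argument on the connected set U
  intro x hx y hy
  by_contra hne
  have hP : IsPreconnected U := hconn.isPreconnected
  set u : Set (ℝ × ℝ) := {z | ∃ ε > 0, Metric.ball z ε ⊆ U ∧ (∀ w ∈ Metric.ball z ε, k w = k z)
    ∧ k z = k x} with hu_def
  set v : Set (ℝ × ℝ) := {z | ∃ ε > 0, Metric.ball z ε ⊆ U ∧ (∀ w ∈ Metric.ball z ε, k w = k z)
    ∧ k z ≠ k x} with hv_def
  have hu_open : IsOpen u := by
    rw [Metric.isOpen_iff]
    rintro z ⟨ε, hε, hball, hconst, hkz⟩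
    refine ⟨ε, hε, fun w hw => ?_⟩
    obtain ⟨δ, hδ, hball', hconst'⟩ := hloc w (hball hw)
    exact ⟨δ, hδ, hball', hconst', by rw [hconst w hw, hkz]⟩
  have hv_open : IsOpen v := by
    rw [Metric.isOpen_iff]
    rintro z ⟨ε, hε, hball, hconst, hkz⟩
    refine ⟨ε, hε, fun w hw => ?_⟩
    obtain ⟨δ, hδ, hball', hconst'⟩ := hloc w (hball hw)
    exact ⟨δ, hδ, hball', hconst', by rw [hconst w hw]; exact hkz⟩
  have hcover : U ⊆ u ∪ v := by
    intro z hz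
    obtain ⟨ε, hε, hball, hconst⟩ := hloc z hz
    by_cases h : k z = k x
    · exact Or.inl ⟨ε, hε, hball, hconst, h⟩
    · exact Or.inr ⟨ε, hε, hball, hconst, h⟩
  have hxu : (U ∩ u).Nonempty := by
    obtain ⟨ε, hε, hball, hconst⟩ := hloc x hx
    exact ⟨x, hx, ε, hε, hball, hconst, rfl⟩
  have hyv : (U ∩ v).Nonempty := by
    obtain ⟨ε, hε, hball, hconst⟩ := hloc y hy
    exact ⟨y, hy, ε, hε, hball, hconst, fun h => hne (h ▸ rfl)⟩
  obtain ⟨z, _, ⟨_, _, _, _, hz1⟩, ⟨_, _, _, _, hz2⟩⟩ :=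
    hP u v hu_open hv_open hcover hxu hyv
  exact hz2 hz1
end
end

section
/- Let S = { (u, v) ∈ ℝ² : |u| < π/2 } and let δE, δF, δG : S → ℝ be smooth functions satisfying on all of S the four equations: (i) (1/2)·∂_u δE = 2·(sin u / cos³u)·δG + (1/cos²u)·∂_u δG; (ii) 2·∂_u δF = ∂_v δE; (iii) ∂_v δF − sin u · cos u · δE − (1/2)·∂_u δG = 0; (iv) (1/(2·cos²u))·∂_v δG = ∂_v δE + 3·tan u · δF. Then at every point of S the function δF satisfies the ordinary differential equation δF = −sin u · cos u · ∂_u δF − (1/2)·cos²u · ∂_u∂_u δF. -/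
open Real

noncomputable section

/-- Partial derivative in the `u` (first) coordinate. -/
def pdu (f : ℝ × ℝ → ℝ) (x : ℝ × ℝ) : ℝ := fderiv ℝ f x (1, 0)

/-- Partial derivative in the `v` (second) coordinate. -/
def pdv (f : ℝ × ℝ → ℝ) (x : ℝ × ℝ) : ℝ := fderiv ℝ f x (0, 1)

section helpers
variable {f g : ℝ × ℝ → ℝ} {φ : ℝ → ℝ} {p w : ℝ × ℝ} {d : ℝ}

private lemma two_le_inf : (2 : WithTop ℕ∞) ≤ ((⊤ : ℕ∞) : WithTop ℕ∞) := by
  rw [show ((2 : WithTop ℕ∞)) = ((2 : ℕ∞) : WithTop ℕ∞) from rfl]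
  exact WithTop.coe_le_coe.mpr le_top

private lemma one_le_inf : (1 : WithTop ℕ∞) ≤ ((⊤ : ℕ∞) : WithTop ℕ∞) := by
  rw [show ((1 : WithTop ℕ∞)) = ((1 : ℕ∞) : WithTop ℕ∞) from rfl]
  exact WithTop.coe_le_coe.mpr le_top

private lemma fdw_congr (h : f =ᶠ[nhds p] g) : fderiv ℝ f p w = fderiv ℝ g p w := by
  rw [h.fderiv_eq]

private lemma fdw_add (hf : DifferentiableAt ℝ f p) (hg : DifferentiableAt ℝ g p) :
    fderiv ℝ (fun q => f q + g q) p w = fderiv ℝ f p w + fderiv ℝ g p w := by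
  rw [fderiv_fun_add hf hg]; rfl

private lemma fdw_const_mul (hf : DifferentiableAt ℝ f p) (c : ℝ) :
    fderiv ℝ (fun q => c * f q) p w = c * fderiv ℝ f p w := by
  rw [fderiv_const_mul hf]; rfl

private lemma fdw_mul (hf : DifferentiableAt ℝ f p) (hg : DifferentiableAt ℝ g p) :
    fderiv ℝ (fun q => f q * g q) p w = f p * fderiv ℝ g p w + g p * fderiv ℝ f p w := by
  rw [fderiv_fun_mul hf hg]; simp

private lemma comp_fst_hasFDerivAt (h : HasDerivAt φ d p.1) :
    HasFDerivAt (fun q : ℝ × ℝ => φ q.1) (d • ContinuousLinearMap.fst ℝ ℝ ℝ) p :=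
  h.comp_hasFDerivAt p ((ContinuousLinearMap.fst ℝ ℝ ℝ).hasFDerivAt)

private lemma fdw_comp_fst (h : HasDerivAt φ d p.1) :
    fderiv ℝ (fun q : ℝ × ℝ => φ q.1) p w = d * w.1 := by
  rw [(comp_fst_hasFDerivAt h).fderiv]; simp [mul_comm]

private lemma diffAt_comp_fst (h : DifferentiableAt ℝ φ p.1) :
    DifferentiableAt ℝ (fun q : ℝ × ℝ => φ q.1) p :=
  h.comp p differentiableAt_fst

private lemma diffAt_fd (hf : ContDiffAt ℝ (⊤ : ℕ∞) f p) (v : ℝ × ℝ) :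
    DifferentiableAt ℝ (fun q => fderiv ℝ f q v) p := by
  have h1 : ContDiffAt ℝ (⊤ : ℕ∞) (fderiv ℝ f) p :=
    hf.fderiv_right (by exact_mod_cast le_top)
  exact (h1.clm_apply contDiffAt_const).differentiableAt (by simp)

private lemma pd_comm (hf : ContDiffAt ℝ (⊤ : ℕ∞) f p) (v w : ℝ × ℝ) :
    fderiv ℝ (fun q => fderiv ℝ f q v) p w = fderiv ℝ (fun q => fderiv ℝ f q w) p v := by
  have hd : DifferentiableAt ℝ (fderiv ℝ f) p :=
    (hf.fderiv_right (m := (⊤ : ℕ∞)) (by exact_mod_cast le_top)).differentiableAt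
      (by simp)
  have key : ∀ u z : ℝ × ℝ, fderiv ℝ (fun q => fderiv ℝ f q u) p z
      = fderiv ℝ (fderiv ℝ f) p z u := by
    intro u z
    rw [fderiv_clm_apply hd (differentiableAt_const u)]
    simp
  rw [key, key]
  exact hf.isSymmSndFDerivAt (by rw [minSmoothness_of_isRCLikeNormedField]; exact two_le_inf) w v

-- pdu/pdv versions
private lemma pdu_congr (h : f =ᶠ[nhds p] g) : pdu f p = pdu g p := fdw_congr h
private lemma pdv_congr (h : f =ᶠ[nhds p] g) : pdv f p = pdv g p := fdw_congr h

private lemma pdu_add (hf : DifferentiableAt ℝ f p) (hg : DifferentiableAt ℝ g p) :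
    pdu (fun q => f q + g q) p = pdu f p + pdu g p := fdw_add hf hg
private lemma pdv_add (hf : DifferentiableAt ℝ f p) (hg : DifferentiableAt ℝ g p) :
    pdv (fun q => f q + g q) p = pdv f p + pdv g p := fdw_add hf hg

private lemma pdu_const_mul (hf : DifferentiableAt ℝ f p) (c : ℝ) :
    pdu (fun q => c * f q) p = c * pdu f p := fdw_const_mul hf c
private lemma pdv_const_mul (hf : DifferentiableAt ℝ f p) (c : ℝ) :
    pdv (fun q => c * f q) p = c * pdv f p := fdw_const_mul hf c

private lemma pdu_mul (hf : DifferentiableAt ℝ f p) (hg : DifferentiableAt ℝ g p) :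
    pdu (fun q => f q * g q) p = f p * pdu g p + g p * pdu f p := fdw_mul hf hg
private lemma pdv_mul (hf : DifferentiableAt ℝ f p) (hg : DifferentiableAt ℝ g p) :
    pdv (fun q => f q * g q) p = f p * pdv g p + g p * pdv f p := fdw_mul hf hg

private lemma pdu_comp_fst (h : HasDerivAt φ d p.1) :
    pdu (fun q : ℝ × ℝ => φ q.1) p = d := by
  have := fdw_comp_fst (w := ((1 : ℝ), (0 : ℝ))) h
  simpa [pdu] using this

private lemma pdv_comp_fst (h : HasDerivAt φ d p.1) :
    pdv (fun q : ℝ × ℝ => φ q.1) p = 0 := by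
  have := fdw_comp_fst (w := ((0 : ℝ), (1 : ℝ))) h
  simpa [pdv] using this

end helpers

/-- The first-order equations of an infinitesimally cogeodesical deformation of the
round sphere metric `du² + cos²u dv²` imply the second-order ODE
`δF = −sin u cos u ∂ᵤδF − (1/2) cos²u ∂ᵤ∂ᵤδF`. -/
theorem infinitesimal_beltrami_sphere_ode
    (S : Set (ℝ × ℝ)) (hS : S = {p : ℝ × ℝ | |p.1| < π / 2})
    (δE δF δG : ℝ × ℝ → ℝ)
    (hE : ContDiffOn ℝ (⊤ : ℕ∞) δE S) (hF : ContDiffOn ℝ (⊤ : ℕ∞) δF S)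
    (hG : ContDiffOn ℝ (⊤ : ℕ∞) δG S)
    (h1 : ∀ p ∈ S, (1 / 2) * pdu δE p =
      2 * (sin p.1 / cos p.1 ^ 3) * δG p + (1 / cos p.1 ^ 2) * pdu δG p)
    (h2 : ∀ p ∈ S, 2 * pdu δF p = pdv δE p)
    (h3 : ∀ p ∈ S, pdv δF p - sin p.1 * cos p.1 * δE p - (1 / 2) * pdu δG p = 0)
    (h4 : ∀ p ∈ S, (1 / (2 * cos p.1 ^ 2)) * pdv δG p =
      pdv δE p + 3 * tan p.1 * δF p) :
    ∀ p ∈ S, δF p =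
      -(sin p.1 * cos p.1) * pdu δF p - (1 / 2) * cos p.1 ^ 2 * pdu (pdu δF) p := by
  have hSopen : IsOpen S := by
    rw [hS]
    exact isOpen_Iio.preimage (continuous_fst.abs)
  -- cosine is positive on S
  have hcospos : ∀ q : ℝ × ℝ, q ∈ S → 0 < cos q.1 := by
    intro q hq
    rw [hS, Set.mem_setOf_eq] at hq
    have := abs_lt.1 hq
    exact Real.cos_pos_of_mem_Ioo ⟨this.1, this.2⟩
  -- Equation (d): ∂ᵥ δG = 4 cos²u ∂ᵤ δF + 6 sin u cos u δF on S
  have hd : ∀ q ∈ S, pdv δG q =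
      (4 * cos q.1 ^ 2) * pdu δF q + (6 * (sin q.1 * cos q.1)) * δF q := by
    intro q hq
    have hcq : cos q.1 ≠ 0 := (hcospos q hq).ne'
    have e4 := h4 q hq
    have e2 := h2 q hq
    rw [Real.tan_eq_sin_div_cos] at e4
    field_simp at e4
    have key : pdv δG q * cos q.1 =
        ((4 * cos q.1 ^ 2) * pdu δF q + (6 * (sin q.1 * cos q.1)) * δF q) * cos q.1 := by
      linear_combination cos q.1 * e4 - 2 * cos q.1 ^ 3 * e2
    exact mul_right_cancel₀ hcq key
  intro p hp
  have hmem : S ∈ nhds p := hSopen.mem_nhds hp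
  have hc : 0 < cos p.1 := hcospos p hp
  have hc0 : cos p.1 ≠ 0 := hc.ne'
  have hEc : ContDiffAt ℝ (⊤ : ℕ∞) δE p := hE.contDiffAt hmem
  have hFc : ContDiffAt ℝ (⊤ : ℕ∞) δF p := hF.contDiffAt hmem
  have hGc : ContDiffAt ℝ (⊤ : ℕ∞) δG p := hG.contDiffAt hmem
  -- differentiability facts
  have hFd : DifferentiableAt ℝ δF p := hFc.differentiableAt (by simp)
  have hGd : DifferentiableAt ℝ δG p := hGc.differentiableAt (by simp)
  have hFu : DifferentiableAt ℝ (pdu δF) p := diffAt_fd hFc (1, 0)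
  have hGu : DifferentiableAt ℝ (pdu δG) p := diffAt_fd hGc (1, 0)
  -- one-variable derivative facts at p.1
  have hcosD : HasDerivAt cos (-sin p.1) p.1 := Real.hasDerivAt_cos p.1
  have hsinD : HasDerivAt sin (cos p.1) p.1 := Real.hasDerivAt_sin p.1
  have hφ1 : HasDerivAt (fun x => 4 * cos x ^ 2) (-(8 * sin p.1 * cos p.1)) p.1 := by
    have := (hcosD.pow 2).const_mul (4 : ℝ)
    exact this.congr_deriv (by ring)
  have hφ2 : HasDerivAt (fun x => 6 * (sin x * cos x))
      (6 * (cos p.1 ^ 2 - sin p.1 ^ 2)) p.1 := by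
    have := (hsinD.mul hcosD).const_mul (6 : ℝ)
    exact this.congr_deriv (by ring)
  have hψ1 : HasDerivAt (fun x => 2 * (sin x / cos x ^ 3))
      (2 * ((cos p.1 * cos p.1 ^ 3 - sin p.1 * ((3 : ℕ) * cos p.1 ^ (3 - 1) * -sin p.1))
        / (cos p.1 ^ 3) ^ 2)) p.1 :=
    (hsinD.div (hcosD.pow 3) (pow_ne_zero 3 hc0)).const_mul 2
  have hψ2 : HasDerivAt (fun x => 1 / cos x ^ 2)
      ((0 * cos p.1 ^ 2 - 1 * ((2 : ℕ) * cos p.1 ^ (2 - 1) * -sin p.1)) / (cos p.1 ^ 2) ^ 2)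
      p.1 :=
    (hasDerivAt_const p.1 (1 : ℝ)).div (hcosD.pow 2) (pow_ne_zero 2 hc0)
  -- Step (e): compute ∂ᵤ∂ᵥ δG
  have heqd : pdv δG =ᶠ[nhds p]
      (fun q => (4 * cos q.1 ^ 2) * pdu δF q + (6 * (sin q.1 * cos q.1)) * δF q) := by
    filter_upwards [hmem] with q hq using hd q hq
  have dA : DifferentiableAt ℝ (fun q : ℝ × ℝ => (4 * cos q.1 ^ 2) * pdu δF q) p :=
    (diffAt_comp_fst hφ1.differentiableAt).mul hFu
  have dB : DifferentiableAt ℝ (fun q : ℝ × ℝ => (6 * (sin q.1 * cos q.1)) * δF q) p :=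
    (diffAt_comp_fst hφ2.differentiableAt).mul hFd
  have hA1 : pdu (fun q : ℝ × ℝ => (4 * cos q.1 ^ 2) * pdu δF q) p
      = (4 * cos p.1 ^ 2) * pdu (pdu δF) p + pdu δF p * (-(8 * sin p.1 * cos p.1)) := by
    rw [pdu_mul (diffAt_comp_fst hφ1.differentiableAt) hFu, pdu_comp_fst hφ1]
  have hA2 : pdu (fun q : ℝ × ℝ => (6 * (sin q.1 * cos q.1)) * δF q) p
      = (6 * (sin p.1 * cos p.1)) * pdu δF p + δF p * (6 * (cos p.1 ^ 2 - sin p.1 ^ 2)) := by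
    rw [pdu_mul (diffAt_comp_fst hφ2.differentiableAt) hFd, pdu_comp_fst hφ2]
  have hGuv : pdu (pdv δG) p
      = (4 * cos p.1 ^ 2) * pdu (pdu δF) p + pdu δF p * (-(8 * sin p.1 * cos p.1))
        + ((6 * (sin p.1 * cos p.1)) * pdu δF p
          + δF p * (6 * (cos p.1 ^ 2 - sin p.1 ^ 2))) := by
    rw [pdu_congr heqd, pdu_add dA dB, hA1, hA2]
  -- Step (b): differentiate equation (1) in v
  have heq1 : (fun q => (1 / 2 : ℝ) * pdu δE q) =ᶠ[nhds p]
      (fun q => (2 * (sin q.1 / cos q.1 ^ 3)) * δG q + (1 / cos q.1 ^ 2) * pdu δG q) := by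
    filter_upwards [hmem] with q hq using h1 q hq
  have dC : DifferentiableAt ℝ (fun q : ℝ × ℝ => (2 * (sin q.1 / cos q.1 ^ 3)) * δG q) p :=
    (diffAt_comp_fst hψ1.differentiableAt).mul hGd
  have dD : DifferentiableAt ℝ (fun q : ℝ × ℝ => (1 / cos q.1 ^ 2) * pdu δG q) p :=
    (diffAt_comp_fst hψ2.differentiableAt).mul hGu
  have hB : (1 / 2 : ℝ) * pdv (pdu δE) p
      = (2 * (sin p.1 / cos p.1 ^ 3)) * pdv δG p + (1 / cos p.1 ^ 2) * pdv (pdu δG) p := by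
    have hEu : DifferentiableAt ℝ (pdu δE) p := diffAt_fd hEc (1, 0)
    have step := pdv_congr heq1
    rw [pdv_const_mul hEu (1 / 2 : ℝ)] at step
    rw [step, pdv_add dC dD,
      pdv_mul (diffAt_comp_fst hψ1.differentiableAt) hGd,
      pdv_mul (diffAt_comp_fst hψ2.differentiableAt) hGu,
      pdv_comp_fst hψ1, pdv_comp_fst hψ2]
    ring
  -- Step (a): differentiate equation (2) in u
  have hA : 2 * pdu (pdu δF) p = pdu (pdv δE) p := by
    have heq2 : (fun q => (2 : ℝ) * pdu δF q) =ᶠ[nhds p] pdv δE := by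
      filter_upwards [hmem] with q hq using h2 q hq
    have := pdu_congr heq2
    rwa [pdu_const_mul hFu 2] at this
  -- symmetry of mixed partials
  have hsymE : pdu (pdv δE) p = pdv (pdu δE) p := pd_comm hEc (0, 1) (1, 0)
  have hsymG : pdv (pdu δG) p = pdu (pdv δG) p := pd_comm hGc (1, 0) (0, 1)
  -- combine
  have hGv : pdv δG p =
      (4 * cos p.1 ^ 2) * pdu δF p + (6 * (sin p.1 * cos p.1)) * δF p := hd p hp
  have hFuu : pdu (pdu δF) p
      = 2 * (sin p.1 / cos p.1 ^ 3) * pdv δG p + (1 / cos p.1 ^ 2) * pdu (pdv δG) p := by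
    rw [← hsymG]
    have := hB
    rw [← hsymE] at this
    rw [← hA] at this
    linarith
  have key : cos p.1 ^ 3 * pdu (pdu δF) p
      = 2 * sin p.1 * pdv δG p + cos p.1 * pdu (pdv δG) p := by
    rw [hFuu]
    field_simp
  rw [hGv, hGuv] at key
  have hpy := sin_sq_add_cos_sq p.1
  have goal6 : 6 * cos p.1 * δF p + 6 * sin p.1 * cos p.1 ^ 2 * pdu δF p
      + 3 * cos p.1 ^ 3 * pdu (pdu δF) p = 0 := by
    linear_combination (-1 : ℝ) * key + (-(6 * cos p.1 * δF p)) * hpy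
  have h6c : (6 : ℝ) * cos p.1 ≠ 0 := by positivity
  have final : 6 * cos p.1 * (δF p + sin p.1 * cos p.1 * pdu δF p
      + (1 / 2) * cos p.1 ^ 2 * pdu (pdu δF) p) = 0 := by linear_combination goal6
  rcases mul_eq_zero.1 final with h | h
  · exact absurd h h6c
  · linarith
end
end

section
/- Let S = { (u, v) ∈ ℝ² : |u| < π/2 } and let δE, δF, δG : S → ℝ be smooth functions satisfying on all of S the four equations: (i) (1/2)·∂_u δE = 2·(sin u / cos³u)·δG + (1/cos²u)·∂_u δG; (ii) 2·∂_u δF = ∂_v δE; (iii) ∂_v δF − sin u · cos u · δE − (1/2)·∂_u δG = 0; (iv) (1/(2·cos²u))·∂_v δG = ∂_v δE + 3·tan u · δF. Define δK : S → ℝ by δK = −δE − (1/4)·∂_u∂_u δE. Then ∂_v δK = 0 at every point of S. -/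
open Real

noncomputable section

namespace BeltramiAux

variable {f g : ℝ × ℝ → ℝ} {p : ℝ × ℝ} {φ : ℝ → ℝ} {d : ℝ}

lemma pdu_congr {S : Set (ℝ × ℝ)} (hS : IsOpen S) (hp : p ∈ S) (h : ∀ q ∈ S, f q = g q) :
    pdu f p = pdu g p := by
  have : f =ᶠ[nhds p] g := Filter.eventuallyEq_of_mem (hS.mem_nhds hp) h
  simp only [pdu, this.fderiv_eq]

lemma pdv_congr {S : Set (ℝ × ℝ)} (hS : IsOpen S) (hp : p ∈ S) (h : ∀ q ∈ S, f q = g q) :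
    pdv f p = pdv g p := by
  have : f =ᶠ[nhds p] g := Filter.eventuallyEq_of_mem (hS.mem_nhds hp) h
  simp only [pdv, this.fderiv_eq]

lemma diff_comp_fst (hφ : DifferentiableAt ℝ φ p.1) :
    DifferentiableAt ℝ (fun x : ℝ × ℝ => φ x.1) p :=
  hφ.comp p differentiableAt_fst

lemma hasFDerivAt_comp_fst (hφ : HasDerivAt φ d p.1) :
    HasFDerivAt (fun x : ℝ × ℝ => φ x.1) (d • ContinuousLinearMap.fst ℝ ℝ ℝ) p :=
  hφ.comp_hasFDerivAt p (hasFDerivAt_fst (𝕜 := ℝ) (p := p))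

lemma pdu_comp_fst (hφ : HasDerivAt φ d p.1) : pdu (fun x : ℝ × ℝ => φ x.1) p = d := by
  simp [pdu, (hasFDerivAt_comp_fst hφ).fderiv]

lemma pdv_comp_fst (hφ : HasDerivAt φ d p.1) : pdv (fun x : ℝ × ℝ => φ x.1) p = 0 := by
  simp [pdv, (hasFDerivAt_comp_fst hφ).fderiv]

lemma pdu_add (hf : DifferentiableAt ℝ f p) (hg : DifferentiableAt ℝ g p) :
    pdu (fun x => f x + g x) p = pdu f p + pdu g p := by
  simp [pdu, fderiv_fun_add hf hg]

lemma pdv_add (hf : DifferentiableAt ℝ f p) (hg : DifferentiableAt ℝ g p) :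
    pdv (fun x => f x + g x) p = pdv f p + pdv g p := by
  simp [pdv, fderiv_fun_add hf hg]

lemma pdu_sub (hf : DifferentiableAt ℝ f p) (hg : DifferentiableAt ℝ g p) :
    pdu (fun x => f x - g x) p = pdu f p - pdu g p := by
  simp [pdu, fderiv_fun_sub hf hg]

lemma pdv_sub (hf : DifferentiableAt ℝ f p) (hg : DifferentiableAt ℝ g p) :
    pdv (fun x => f x - g x) p = pdv f p - pdv g p := by
  simp [pdv, fderiv_fun_sub hf hg]

lemma pdv_neg : pdv (fun x => -f x) p = -pdv f p := by
  simp [pdv, fderiv_neg]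

lemma pdu_const_mul (hf : DifferentiableAt ℝ f p) (c : ℝ) :
    pdu (fun x => c * f x) p = c * pdu f p := by
  simp [pdu, fderiv_const_mul hf c]

lemma pdv_const_mul (hf : DifferentiableAt ℝ f p) (c : ℝ) :
    pdv (fun x => c * f x) p = c * pdv f p := by
  simp [pdv, fderiv_const_mul hf c]

lemma pdu_umul (hφ : HasDerivAt φ d p.1) (hf : DifferentiableAt ℝ f p) :
    pdu (fun x => φ x.1 * f x) p = d * f p + φ p.1 * pdu f p := by
  have hc : DifferentiableAt ℝ (fun x : ℝ × ℝ => φ x.1) p := diff_comp_fst hφ.differentiableAt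
  have h1 : (fderiv ℝ (fun x : ℝ × ℝ => φ x.1) p) (1, 0) = d := pdu_comp_fst hφ
  simp only [pdu, fderiv_fun_mul hc hf, ContinuousLinearMap.add_apply,
    ContinuousLinearMap.smul_apply, smul_eq_mul, h1]
  ring

lemma pdv_umul (hφ : HasDerivAt φ d p.1) (hf : DifferentiableAt ℝ f p) :
    pdv (fun x => φ x.1 * f x) p = φ p.1 * pdv f p := by
  have hc : DifferentiableAt ℝ (fun x : ℝ × ℝ => φ x.1) p := diff_comp_fst hφ.differentiableAt
  have h1 : (fderiv ℝ (fun x : ℝ × ℝ => φ x.1) p) (0, 1) = 0 := pdv_comp_fst hφ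
  simp only [pdv, fderiv_fun_mul hc hf, ContinuousLinearMap.add_apply,
    ContinuousLinearMap.smul_apply, smul_eq_mul, h1]
  ring

lemma contDiffAt_pdu (hf : ContDiffAt ℝ (⊤ : ℕ∞) f p) : ContDiffAt ℝ (⊤ : ℕ∞) (pdu f) p := by
  have h := hf.fderiv_right (m := (⊤ : ℕ∞)) (by simp)
  exact h.clm_apply contDiffAt_const

lemma contDiffAt_pdv (hf : ContDiffAt ℝ (⊤ : ℕ∞) f p) : ContDiffAt ℝ (⊤ : ℕ∞) (pdv f) p := by
  have h := hf.fderiv_right (m := (⊤ : ℕ∞)) (by simp)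
  exact h.clm_apply contDiffAt_const

lemma pd_symm (hf : ContDiffAt ℝ (⊤ : ℕ∞) f p) : pdu (pdv f) p = pdv (pdu f) p := by
  have hd : DifferentiableAt ℝ (fderiv ℝ f) p :=
    ((hf.fderiv_right (m := (⊤ : ℕ∞)) (by simp)).differentiableAt (by simp))
  have hsymm : IsSymmSndFDerivAt ℝ f p := hf.isSymmSndFDerivAt (by simp; exact (WithTop.coe_le_coe.mpr le_top : ((2:ℕ∞) : WithTop ℕ∞) ≤ ((⊤:ℕ∞) : WithTop ℕ∞)))
  have e1 : pdv f = fun x => fderiv ℝ f x (0, 1) := rfl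
  have e2 : pdu f = fun x => fderiv ℝ f x (1, 0) := rfl
  simp only [pdu, pdv, e1, e2]
  rw [fderiv_clm_apply hd (differentiableAt_const _),
    fderiv_clm_apply hd (differentiableAt_const _)]
  simp [hsymm ((0:ℝ), (1:ℝ)) ((1:ℝ), (0:ℝ))]

end BeltramiAux

/-- For an infinitesimally cogeodesical deformation of the round sphere metric
`du² + cos²u dv²`, the variation `δK = −δE − (1/4) ∂ᵤ∂ᵤδE` of the Gaussian curvature
satisfies `∂ᵥ δK = 0`. -/
theorem infinitesimal_beltrami_sphere_deltaK
    (S : Set (ℝ × ℝ)) (hS : S = {p : ℝ × ℝ | |p.1| < π / 2})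
    (δE δF δG : ℝ × ℝ → ℝ)
    (hE : ContDiffOn ℝ (⊤ : ℕ∞) δE S) (hF : ContDiffOn ℝ (⊤ : ℕ∞) δF S)
    (hG : ContDiffOn ℝ (⊤ : ℕ∞) δG S)
    (h1 : ∀ p ∈ S, (1 / 2) * pdu δE p =
      2 * (sin p.1 / cos p.1 ^ 3) * δG p + (1 / cos p.1 ^ 2) * pdu δG p)
    (h2 : ∀ p ∈ S, 2 * pdu δF p = pdv δE p)
    (h3 : ∀ p ∈ S, pdv δF p - sin p.1 * cos p.1 * δE p - (1 / 2) * pdu δG p = 0)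
    (h4 : ∀ p ∈ S, (1 / (2 * cos p.1 ^ 2)) * pdv δG p =
      pdv δE p + 3 * tan p.1 * δF p)
    (δK : ℝ × ℝ → ℝ)
    (hK : ∀ p, δK p = -δE p - (1 / 4) * pdu (pdu δE) p) :
    ∀ p ∈ S, pdv δK p = 0 := by
  have hSopen : IsOpen S := by
    rw [hS]; exact isOpen_lt (continuous_fst.abs) continuous_const
  have hcos : ∀ q : ℝ × ℝ, q ∈ S → 0 < cos q.1 := by
    intro q hq; rw [hS] at hq
    exact Real.cos_pos_of_mem_Ioo (Set.mem_Ioo.2 (abs_lt.1 hq))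
  -- pointwise smoothness / differentiability
  have cE : ∀ q ∈ S, ContDiffAt ℝ (⊤ : ℕ∞) δE q := fun q hq => hE.contDiffAt (hSopen.mem_nhds hq)
  have cF : ∀ q ∈ S, ContDiffAt ℝ (⊤ : ℕ∞) δF q := fun q hq => hF.contDiffAt (hSopen.mem_nhds hq)
  have cG : ∀ q ∈ S, ContDiffAt ℝ (⊤ : ℕ∞) δG q := fun q hq => hG.contDiffAt (hSopen.mem_nhds hq)
  have dE : ∀ q ∈ S, DifferentiableAt ℝ δE q :=
    fun q hq => (cE q hq).differentiableAt (by simp)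
  have dF : ∀ q ∈ S, DifferentiableAt ℝ δF q :=
    fun q hq => (cF q hq).differentiableAt (by simp)
  have dG : ∀ q ∈ S, DifferentiableAt ℝ δG q :=
    fun q hq => (cG q hq).differentiableAt (by simp)
  have dEu : ∀ q ∈ S, DifferentiableAt ℝ (pdu δE) q :=
    fun q hq => (BeltramiAux.contDiffAt_pdu (cE q hq)).differentiableAt (by simp)
  have dEv : ∀ q ∈ S, DifferentiableAt ℝ (pdv δE) q :=
    fun q hq => (BeltramiAux.contDiffAt_pdv (cE q hq)).differentiableAt (by simp)
  have dFu : ∀ q ∈ S, DifferentiableAt ℝ (pdu δF) q :=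
    fun q hq => (BeltramiAux.contDiffAt_pdu (cF q hq)).differentiableAt (by simp)
  have dGu : ∀ q ∈ S, DifferentiableAt ℝ (pdu δG) q :=
    fun q hq => (BeltramiAux.contDiffAt_pdu (cG q hq)).differentiableAt (by simp)
  have dEuv : ∀ q ∈ S, DifferentiableAt ℝ (pdv (pdu δE)) q :=
    fun q hq => (BeltramiAux.contDiffAt_pdv (BeltramiAux.contDiffAt_pdu (cE q hq))).differentiableAt
      (by simp)
  have dEuu : ∀ q ∈ S, DifferentiableAt ℝ (pdu (pdu δE)) q :=
    fun q hq => (BeltramiAux.contDiffAt_pdu (BeltramiAux.contDiffAt_pdu (cE q hq))).differentiableAt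
      (by simp)
  -- Stage 1 : cleared-denominator forms of (1) and (4)
  have E1 : ∀ q ∈ S, cos q.1 ^ 3 * pdu δE q = 4 * sin q.1 * δG q + 2 * cos q.1 * pdu δG q := by
    intro q hq
    have hc : cos q.1 ≠ 0 := (hcos q hq).ne'
    have h := h1 q hq
    field_simp at h
    apply mul_left_cancel₀ (pow_ne_zero 2 hc)
    linear_combination (cos q.1 ^ 2) * h
  have E4 : ∀ q ∈ S, pdv δG q = 2 * cos q.1 ^ 2 * pdv δE q + 6 * (sin q.1 * cos q.1) * δF q := by
    intro q hq
    have hc : cos q.1 ≠ 0 := (hcos q hq).ne'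
    have h := h4 q hq
    rw [Real.tan_eq_sin_div_cos] at h
    field_simp at h
    apply mul_left_cancel₀ hc
    linear_combination (cos q.1) * h
  -- Stage 2 : the key first-order identity  cos³·Euv = -4cos·F - 2 sin cos²·Ev on S
  have D1 : ∀ q ∈ S, cos q.1 ^ 3 * pdv (pdu δE) q =
      -4 * cos q.1 * δF q - 2 * (sin q.1 * cos q.1 ^ 2) * pdv δE q := by
    intro q hq
    have hc : cos q.1 ≠ 0 := (hcos q hq).ne'
    have A0 : pdv (fun x => cos x.1 ^ 3 * pdu δE x) q =
        pdv (fun x => 4 * sin x.1 * δG x + 2 * cos x.1 * pdu δG x) q :=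
      BeltramiAux.pdv_congr hSopen hq E1
    rw [BeltramiAux.pdv_umul (φ := fun t => cos t ^ 3) ((Real.hasDerivAt_cos q.1).pow 3)
        (dEu q hq),
      BeltramiAux.pdv_add
        ((BeltramiAux.diff_comp_fst (φ := fun t => 4 * sin t) (by fun_prop)).fun_mul (dG q hq))
        ((BeltramiAux.diff_comp_fst (φ := fun t => 2 * cos t) (by fun_prop)).fun_mul (dGu q hq)),
      BeltramiAux.pdv_umul (φ := fun t => 4 * sin t) ((Real.hasDerivAt_sin q.1).const_mul 4)
        (dG q hq),
      BeltramiAux.pdv_umul (φ := fun t => 2 * cos t) ((Real.hasDerivAt_cos q.1).const_mul 2)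
        (dGu q hq)] at A0
    have B0 : pdu (pdv δG) q =
        pdu (fun x => 2 * cos x.1 ^ 2 * pdv δE x + 6 * (sin x.1 * cos x.1) * δF x) q :=
      BeltramiAux.pdu_congr hSopen hq E4
    rw [BeltramiAux.pdu_add
        ((BeltramiAux.diff_comp_fst (φ := fun t => 2 * cos t ^ 2) (by fun_prop)).fun_mul (dEv q hq))
        ((BeltramiAux.diff_comp_fst (φ := fun t => 6 * (sin t * cos t)) (by fun_prop)).fun_mul (dF q hq)),
      BeltramiAux.pdu_umul (φ := fun t => 2 * cos t ^ 2)
        (((Real.hasDerivAt_cos q.1).pow 2).const_mul 2) (dEv q hq),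
      BeltramiAux.pdu_umul (φ := fun t => 6 * (sin t * cos t))
        (((Real.hasDerivAt_sin q.1).mul (Real.hasDerivAt_cos q.1)).const_mul 6)
        (dF q hq)] at B0
    have sG : pdu (pdv δG) q = pdv (pdu δG) q := BeltramiAux.pd_symm (cG q hq)
    have sE : pdu (pdv δE) q = pdv (pdu δE) q := BeltramiAux.pd_symm (cE q hq)
    have h2q := h2 q hq
    have P := sin_sq_add_cos_sq q.1
    push_cast at A0 B0
    linear_combination (-1/3 : ℝ) * A0 + (-2 * cos q.1 / 3) * B0 + (2 * cos q.1 / 3) * sG +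
      (-4 * cos q.1 ^ 3 / 3) * sE + (-4 * sin q.1 / 3) * (E4 q hq) +
      (-2 * sin q.1 * cos q.1 ^ 2) * h2q + (-4 * cos q.1 * δF q) * P
  -- Stage 3 : differentiate D1 in u, conclude ∂ᵥ(∂ᵤ∂ᵤ δE) = -4 ∂ᵥ δE
  intro p hp
  have hc : cos p.1 ≠ 0 := (hcos p hp).ne'
  have C0 : pdu (fun x => cos x.1 ^ 3 * pdv (pdu δE) x) p =
      pdu (fun x => -4 * cos x.1 * δF x - 2 * (sin x.1 * cos x.1 ^ 2) * pdv δE x) p :=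
    BeltramiAux.pdu_congr hSopen hp D1
  rw [BeltramiAux.pdu_umul (φ := fun t => cos t ^ 3) ((Real.hasDerivAt_cos p.1).pow 3)
      (dEuv p hp),
    BeltramiAux.pdu_sub
      ((BeltramiAux.diff_comp_fst (φ := fun t => -4 * cos t) (by fun_prop)).fun_mul (dF p hp))
      ((BeltramiAux.diff_comp_fst (φ := fun t => 2 * (sin t * cos t ^ 2)) (by fun_prop)).fun_mul (dEv p hp)),
    BeltramiAux.pdu_umul (φ := fun t => -4 * cos t) ((Real.hasDerivAt_cos p.1).const_mul (-4))
      (dF p hp),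
    BeltramiAux.pdu_umul (φ := fun t => 2 * (sin t * cos t ^ 2))
      (((Real.hasDerivAt_sin p.1).mul ((Real.hasDerivAt_cos p.1).pow 2)).const_mul 2)
      (dEv p hp)] at C0
  have sE2 : pdu (pdv (pdu δE)) p = pdv (pdu (pdu δE)) p :=
    BeltramiAux.pd_symm (BeltramiAux.contDiffAt_pdu (cE p hp))
  have sE1 : pdu (pdv δE) p = pdv (pdu δE) p := BeltramiAux.pd_symm (cE p hp)
  have h2p := h2 p hp
  have P := sin_sq_add_cos_sq p.1
  push_cast [Pi.pow_apply] at C0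
  have key : pdv (pdu (pdu δE)) p = -4 * pdv δE p := by
    have hc4 : (cos p.1) ^ 4 ≠ 0 := pow_ne_zero _ hc
    apply mul_left_cancel₀ hc4
    linear_combination (cos p.1) * C0 + (sin p.1) * (D1 p hp) + (-2 * cos p.1 ^ 2) * h2p +
      (2 * cos p.1 ^ 2 * pdv δE p) * P + (-(cos p.1 ^ 4)) * sE2 + (-2 * sin p.1 * cos p.1 ^ 3) * sE1
  -- Conclusion
  have hδK : δK = fun x => -δE x - (1 / 4) * pdu (pdu δE) x := funext hK
  rw [hδK, BeltramiAux.pdv_sub (dE p hp).fun_neg ((dEuu p hp).const_mul (1 / 4)),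
    BeltramiAux.pdv_neg, BeltramiAux.pdv_const_mul (dEuu p hp) (1 / 4), key]
  ring
end
end

section
/- Let U ⊆ ℝⁿ be open, φ : U → ℝ smooth, p ∈ U and v ∈ ℝⁿ a unit vector. Let γ : (−ε, ε) → U be a curve solving the conformal geodesic equation for φ with γ(0) = p and γ′(0) = v. Then, as t → 0, γ(t) = p + t·v + (t²/2)·( ∇φ − 2·⟨∇φ, v⟩·v ) + (t³/6)·( Hs_φ(v) − 2·Hess_φ(v, v)·v − 2·‖∇φ‖²·v + 8·⟨∇φ, v⟩²·v − 4·⟨∇φ, v⟩·∇φ ) + o(t³), where ∇φ, Hs_φ and Hess_φ are all evaluated at the point p. -/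
open scoped RealInnerProductSpace
open Asymptotics Filter Topology

noncomputable section

/-- The Hessian of `φ` at `p`, as a bilinear form evaluated at `(v, w)`. -/
def Hess {n : ℕ} (φ : EuclideanSpace ℝ (Fin n) → ℝ)
    (p v w : EuclideanSpace ℝ (Fin n)) : ℝ :=
  fderiv ℝ (fderiv ℝ φ) p v w

/-- The Hessian operator of `φ` at `p`, characterised by
`⟪HessOp φ p v, w⟫ = Hess φ p v w`. -/
def HessOp {n : ℕ} (φ : EuclideanSpace ℝ (Fin n) → ℝ)
    (p v : EuclideanSpace ℝ (Fin n)) : EuclideanSpace ℝ (Fin n) :=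
  fderiv ℝ (fun x => gradient φ x) p v

/-- `γ` solves the conformal geodesic equation for `φ` on the interval `(-ε, ε)`,
with values in `U`:  `γ″ = ‖γ′‖² ∇φ(γ) − 2 ⟨∇φ(γ), γ′⟩ γ′`. -/
def IsConformalGeodesic {n : ℕ} (U : Set (EuclideanSpace ℝ (Fin n)))
    (φ : EuclideanSpace ℝ (Fin n) → ℝ) (ε : ℝ)
    (γ : ℝ → EuclideanSpace ℝ (Fin n)) : Prop :=
  (∀ t ∈ Set.Ioo (-ε) ε, γ t ∈ U) ∧
  ContDiffOn ℝ 2 γ (Set.Ioo (-ε) ε) ∧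
  ∀ t ∈ Set.Ioo (-ε) ε,
    deriv (deriv γ) t =
      (‖deriv γ t‖ ^ 2) • gradient φ (γ t)
        - (2 * ⟪gradient φ (γ t), deriv γ t⟫) • deriv γ t

/-- Integrating a little-o estimate on the derivative. -/
lemma isLittleO_of_deriv_isLittleO {E : Type*} [NormedAddCommGroup E] [NormedSpace ℝ E]
    {f f' : ℝ → E} {k : ℕ} (hf0 : f 0 = 0)
    (hd : ∀ᶠ t in 𝓝 (0:ℝ), HasDerivAt f (f' t) t)
    (h : f' =o[𝓝 (0:ℝ)] fun t : ℝ => t ^ k) :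
    f =o[𝓝 (0:ℝ)] fun t : ℝ => t ^ (k + 1) := by
  rw [Asymptotics.isLittleO_iff] at h ⊢
  intro c hc
  obtain ⟨δ, hδ, hδ'⟩ := Metric.eventually_nhds_iff.mp (hd.and (h hc))
  refine Metric.eventually_nhds_iff.mpr ⟨δ, hδ, fun t ht => ?_⟩
  have habs : ∀ x ∈ Set.uIcc (0:ℝ) t, |x| ≤ |t| := by
    intro x hx
    rcases le_total (0:ℝ) t with h'|h'
    · rw [Set.uIcc_of_le h'] at hx
      rw [abs_of_nonneg hx.1, abs_of_nonneg h']; exact hx.2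
    · rw [Set.uIcc_of_ge h'] at hx
      rw [abs_of_nonpos hx.2, abs_of_nonpos h']; linarith [hx.1]
  have htd : |t| < δ := by rwa [Real.dist_eq, sub_zero] at ht
  have hsub : ∀ x ∈ Set.uIcc (0:ℝ) t, dist x 0 < δ := fun x hx => by
    rw [Real.dist_eq, sub_zero]; exact lt_of_le_of_lt (habs x hx) htd
  have key := (convex_uIcc (0:ℝ) t).norm_image_sub_le_of_norm_hasDerivWithin_le
    (f' := f') (fun x hx => ((hδ' (hsub x hx)).1).hasDerivWithinAt)
    (C := c * |t| ^ k)
    (fun x hx => by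
      have h2 := (hδ' (hsub x hx)).2
      calc ‖f' x‖ ≤ c * ‖x ^ k‖ := h2
        _ = c * |x| ^ k := by rw [norm_pow, Real.norm_eq_abs]
        _ ≤ c * |t| ^ k :=
          mul_le_mul_of_nonneg_left (pow_le_pow_left₀ (abs_nonneg x) (habs x hx) k) hc.le)
    Set.left_mem_uIcc Set.right_mem_uIcc
  rw [hf0, sub_zero, sub_zero] at key
  calc ‖f t‖ ≤ c * |t| ^ k * ‖t‖ := key
    _ = c * ‖t ^ (k + 1)‖ := by
        rw [Real.norm_eq_abs, norm_pow, Real.norm_eq_abs, pow_succ]; ring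

/-- Third-order Taylor expansion of a conformal geodesic with unit initial velocity. -/
theorem conformal_geodesic_taylor {n : ℕ}
    (U : Set (EuclideanSpace ℝ (Fin n))) (hU : IsOpen U)
    (φ : EuclideanSpace ℝ (Fin n) → ℝ) (hφ : ContDiffOn ℝ (⊤ : ℕ∞) φ U)
    (p : EuclideanSpace ℝ (Fin n)) (hp : p ∈ U)
    (v : EuclideanSpace ℝ (Fin n)) (hv : ‖v‖ = 1)
    (ε : ℝ) (hε : 0 < ε) (γ : ℝ → EuclideanSpace ℝ (Fin n))
    (hγ : IsConformalGeodesic U φ ε γ)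
    (hγ0 : γ 0 = p) (hγ'0 : deriv γ 0 = v) :
    (fun t : ℝ => γ t - (p + t • v
        + (t ^ 2 / 2) • (gradient φ p - (2 * ⟪gradient φ p, v⟫) • v)
        + (t ^ 3 / 6) • (HessOp φ p v - (2 * Hess φ p v v) • v
            - (2 * ‖gradient φ p‖ ^ 2) • v + (8 * ⟪gradient φ p, v⟫ ^ 2) • v
            - (4 * ⟪gradient φ p, v⟫) • gradient φ p)))
      =o[𝓝 0] (fun t : ℝ => t ^ 3) := by
  obtain ⟨hmem, hC2, heq⟩ := hγ
  have h0 : (0:ℝ) ∈ Set.Ioo (-ε) ε := ⟨by linarith, hε⟩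
  have hIoo : Set.Ioo (-ε) ε ∈ 𝓝 (0:ℝ) := isOpen_Ioo.mem_nhds h0
  set w : EuclideanSpace ℝ (Fin n) := gradient φ p - (2 * ⟪gradient φ p, v⟫) • v with hw
  set A : EuclideanSpace ℝ (Fin n) := HessOp φ p v - (2 * Hess φ p v v) • v
      - (2 * ‖gradient φ p‖ ^ 2) • v + (8 * ⟪gradient φ p, v⟫ ^ 2) • v
      - (4 * ⟪gradient φ p, v⟫) • gradient φ p with hA
  -- basic differentiability of γ
  have hγdiff : ∀ t ∈ Set.Ioo (-ε) ε, HasDerivAt γ (deriv γ t) t := fun t ht =>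
    ((hC2.differentiableOn two_ne_zero).differentiableAt (isOpen_Ioo.mem_nhds ht)).hasDerivAt
  have hC1 : ContDiffOn ℝ 1 (deriv γ) (Set.Ioo (-ε) ε) :=
    hC2.deriv_of_isOpen isOpen_Ioo (by norm_num)
  have hγ'diff : ∀ t ∈ Set.Ioo (-ε) ε, HasDerivAt (deriv γ) (deriv (deriv γ) t) t := fun t ht =>
    ((hC1.differentiableOn one_ne_zero).differentiableAt (isOpen_Ioo.mem_nhds ht)).hasDerivAt
  -- second derivative at 0
  have h20 : deriv (deriv γ) 0 = w := by
    have h := heq 0 h0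
    rw [hγ0, hγ'0, hv] at h
    simpa [hw] using h
  -- smoothness of φ at p
  have hφat : ContDiffAt ℝ 2 φ p :=
    (hφ.contDiffAt (hU.mem_nhds hp)).of_le (by exact WithTop.coe_le_coe.mpr le_top)
  have hfd : ContDiffAt ℝ 1 (fderiv ℝ φ) p := hφat.fderiv_right le_rfl
  set iso : StrongDual ℝ (EuclideanSpace ℝ (Fin n)) ≃ₗᵢ[ℝ] EuclideanSpace ℝ (Fin n) :=
    (InnerProductSpace.toDual ℝ (EuclideanSpace ℝ (Fin n))).symm with hiso
  have hgrad_eq : gradient φ = iso ∘ fderiv ℝ φ := rfl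
  have hgradDiff : DifferentiableAt ℝ (gradient φ) p := by
    rw [hgrad_eq]
    exact iso.differentiable.differentiableAt.comp p (hfd.differentiableAt one_ne_zero)
  have hHess : ∀ u : EuclideanSpace ℝ (Fin n), ⟪HessOp φ p v, u⟫ = Hess φ p v u := by
    intro u
    have e : (fun x => gradient φ x) = iso ∘ fderiv ℝ φ := rfl
    rw [HessOp, e, iso.comp_fderiv]
    exact InnerProductSpace.toDual_symm_apply
  have hHvv : ⟪HessOp φ p v, v⟫ = Hess φ p v v := hHess v
  -- derivatives at 0
  have hd1 : HasDerivAt γ v 0 := hγ'0 ▸ hγdiff 0 h0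
  have hd2 : HasDerivAt (deriv γ) w 0 := h20 ▸ hγ'diff 0 h0
  have hgH : HasFDerivAt (gradient φ) (fderiv ℝ (gradient φ) p) (γ 0) := by
    rw [hγ0]; exact hgradDiff.hasFDerivAt
  have hHv : fderiv ℝ (gradient φ) p v = HessOp φ p v := rfl
  have hdg : HasDerivAt (fun t => gradient φ (γ t)) (HessOp φ p v) 0 := by
    have h := hgH.comp_hasDerivAt 0 hd1
    rwa [hHv] at h
  have hi1 : HasDerivAt (fun t => ⟪deriv γ t, deriv γ t⟫) (⟪v, w⟫ + ⟪w, v⟫) 0 := by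
    have h := HasDerivAt.inner ℝ hd2 hd2
    rwa [hγ'0] at h
  have hT1 : HasDerivAt (fun t => ⟪deriv γ t, deriv γ t⟫ • gradient φ (γ t))
      (⟪v, v⟫ • HessOp φ p v + (⟪v, w⟫ + ⟪w, v⟫) • gradient φ p) 0 := by
    have h := hi1.smul hdg
    rwa [hγ0, hγ'0] at h
  have hi2 : HasDerivAt (fun t => 2 * ⟪gradient φ (γ t), deriv γ t⟫)
      (2 * (⟪gradient φ p, w⟫ + ⟪HessOp φ p v, v⟫)) 0 := by
    have h := (HasDerivAt.inner ℝ hdg hd2).const_mul 2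
    rwa [hγ0, hγ'0] at h
  have hT2 : HasDerivAt (fun t => (2 * ⟪gradient φ (γ t), deriv γ t⟫) • deriv γ t)
      ((2 * ⟪gradient φ p, v⟫) • w + (2 * (⟪gradient φ p, w⟫ + ⟪HessOp φ p v, v⟫)) • v) 0 := by
    have h := hi2.smul hd2
    rwa [hγ0, hγ'0] at h
  have hdd : HasDerivAt (deriv (deriv γ))
      (⟪v, v⟫ • HessOp φ p v + (⟪v, w⟫ + ⟪w, v⟫) • gradient φ p
        - ((2 * ⟪gradient φ p, v⟫) • w
          + (2 * (⟪gradient φ p, w⟫ + ⟪HessOp φ p v, v⟫)) • v)) 0 := by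
    refine (hT1.sub hT2).congr_of_eventuallyEq ?_
    filter_upwards [hIoo] with t ht
    rw [heq t ht, ← real_inner_self_eq_norm_sq]; rfl
  -- algebraic identification of the third-order coefficient
  have hvv : ⟪v, v⟫ = (1:ℝ) := by rw [real_inner_self_eq_norm_sq, hv]; norm_num
  have hAeq : ⟪v, v⟫ • HessOp φ p v + (⟪v, w⟫ + ⟪w, v⟫) • gradient φ p
        - ((2 * ⟪gradient φ p, v⟫) • w
          + (2 * (⟪gradient φ p, w⟫ + ⟪HessOp φ p v, v⟫)) • v) = A := by
    have h1 : ⟪v, w⟫ = -⟪gradient φ p, v⟫ := by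
      rw [hw, inner_sub_right, real_inner_smul_right, hvv,
        real_inner_comm v (gradient φ p)]; ring
    have h2 : ⟪w, v⟫ = -⟪gradient φ p, v⟫ := by
      rw [hw, inner_sub_left, real_inner_smul_left, hvv]; ring
    have h3 : ⟪gradient φ p, w⟫ = ‖gradient φ p‖ ^ 2 - 2 * ⟪gradient φ p, v⟫ ^ 2 := by
      rw [hw, inner_sub_right, real_inner_smul_right, ← real_inner_self_eq_norm_sq]; ring
    rw [h1, h2, h3, hvv, hHvv, hw, hA]
    module
  rw [hAeq] at hdd
  -- second-order remainder is o(t)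
  have hR2 : (fun t : ℝ => deriv (deriv γ) t - (w + t • A)) =o[𝓝 (0:ℝ)]
      fun t : ℝ => t ^ 1 := by
    have h := hasDerivAt_iff_isLittleO.mp hdd
    refine h.congr (fun t => ?_) (fun t => ?_)
    · rw [h20, sub_zero, sub_sub]
    · rw [sub_zero, pow_one]
  -- first-order remainder is o(t^2)
  have hR1 : (fun t : ℝ => deriv γ t - (v + t • w + (t ^ 2 / 2) • A)) =o[𝓝 (0:ℝ)]
      fun t : ℝ => t ^ 2 := by
    refine isLittleO_of_deriv_isLittleO (f' := fun t => deriv (deriv γ) t - (w + t • A))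
      (by simp [hγ'0]) ?_ hR2
    filter_upwards [hIoo] with t ht
    have hp1 : HasDerivAt (fun s : ℝ => v + s • w + (s ^ 2 / 2) • A) (w + t • A) t := by
      have e1 : HasDerivAt (fun s : ℝ => s • w) w t := by
        simpa using (hasDerivAt_id t).smul_const w
      have e2 : HasDerivAt (fun s : ℝ => (s ^ 2 / 2) • A) (t • A) t := by
        have h := ((hasDerivAt_pow 2 t).div_const 2).smul_const A
        norm_num at h
        exact h
      have h := ((hasDerivAt_const t v).add e1).add e2
      rw [zero_add] at h
      exact h
    exact (hγ'diff t ht).sub hp1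
  -- zeroth-order remainder is o(t^3)
  have hR0 : (fun t : ℝ => γ t - (p + t • v + (t ^ 2 / 2) • w + (t ^ 3 / 6) • A)) =o[𝓝 (0:ℝ)]
      fun t : ℝ => t ^ 3 := by
    refine isLittleO_of_deriv_isLittleO
      (f' := fun t => deriv γ t - (v + t • w + (t ^ 2 / 2) • A)) (by simp [hγ0]) ?_ hR1
    filter_upwards [hIoo] with t ht
    have hp0 : HasDerivAt (fun s : ℝ => p + s • v + (s ^ 2 / 2) • w + (s ^ 3 / 6) • A)
        (v + t • w + (t ^ 2 / 2) • A) t := by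
      have e1 : HasDerivAt (fun s : ℝ => s • v) v t := by
        simpa using (hasDerivAt_id t).smul_const v
      have e2 : HasDerivAt (fun s : ℝ => (s ^ 2 / 2) • w) (t • w) t := by
        have h := ((hasDerivAt_pow 2 t).div_const 2).smul_const w
        norm_num at h
        exact h
      have e3 : HasDerivAt (fun s : ℝ => (s ^ 3 / 6) • A) ((t ^ 2 / 2) • A) t := by
        have h := ((hasDerivAt_pow 3 t).div_const 6).smul_const A
        norm_num at h
        rw [show (3:ℝ) * t ^ 2 / 6 = t ^ 2 / 2 by ring] at h
        exact h
      have h := (((hasDerivAt_const t p).add e1).add e2).add e3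
      rw [zero_add] at h
      exact h
    exact (hγdiff t ht).sub hp0
  exact hR0
end
end

section
/- Let n ≥ 1, let U ⊆ ℝⁿ be open, and let φ : U → ℝ be smooth. Suppose there is a function μ : U → ℝ such that Hess φ_p(v, w) = μ(p)·⟨v, w⟩ + ⟨∇φ(p), v⟩·⟨∇φ(p), w⟩ for all p ∈ U and all v, w ∈ ℝⁿ. Then the function h := e^{−φ} satisfies Hess h_p(v, w) = (Δh(p)/n)·⟨v, w⟩ for all p ∈ U and all v, w ∈ ℝⁿ, where Δ denotes the Euclidean Laplacian. -/
open scoped RealInnerProductSpace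

noncomputable section

/-- The Euclidean Laplacian of `φ` at `p`: the trace of the Hessian. -/
def lap {n : ℕ} (φ : EuclideanSpace ℝ (Fin n) → ℝ)
    (p : EuclideanSpace ℝ (Fin n)) : ℝ :=
  ∑ i : Fin n, Hess φ p (EuclideanSpace.single i 1) (EuclideanSpace.single i 1)

/-- If `Hess φ = μ·g + dφ ⊗ dφ`, then `h = e^{−φ}` satisfies `Hess h = (Δh/n)·g`. -/
theorem hessian_condition_concircular {n : ℕ} (hn : 1 ≤ n)
    (U : Set (EuclideanSpace ℝ (Fin n))) (hU : IsOpen U)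
    (φ : EuclideanSpace ℝ (Fin n) → ℝ) (hφ : ContDiffOn ℝ (⊤ : ℕ∞) φ U)
    (μ : EuclideanSpace ℝ (Fin n) → ℝ)
    (hμ : ∀ p ∈ U, ∀ v w : EuclideanSpace ℝ (Fin n),
      Hess φ p v w = μ p * ⟪v, w⟫ + ⟪gradient φ p, v⟫ * ⟪gradient φ p, w⟫)
    (h : EuclideanSpace ℝ (Fin n) → ℝ)
    (hh : ∀ x, h x = Real.exp (-φ x)) :
    ∀ p ∈ U, ∀ v w : EuclideanSpace ℝ (Fin n),
      Hess h p v w = (lap h p / n) * ⟪v, w⟫ := by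
  -- derivative of h at points of U
  have hder : ∀ x ∈ U, HasFDerivAt h ((-h x) • fderiv ℝ φ x) x := by
    intro x hx
    have hdx : DifferentiableAt ℝ φ x :=
      (hφ.contDiffAt (hU.mem_nhds hx)).differentiableAt (by simp)
    have h1 : HasFDerivAt (fun y => Real.exp (-φ y))
        (Real.exp (-φ x) • (-(fderiv ℝ φ x))) x :=
      (hdx.hasFDerivAt.neg).exp
    have h2 : HasFDerivAt h (Real.exp (-φ x) • (-(fderiv ℝ φ x))) x := by
      have : h = fun y => Real.exp (-φ y) := funext hh
      rw [this]; exact h1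
    convert h2 using 1
    rw [hh x, smul_neg, neg_smul]
  have key : ∀ q ∈ U, ∀ v w : EuclideanSpace ℝ (Fin n),
      Hess h q v w = (-(h q * μ q)) * ⟪v, w⟫ := by
    intro q hq v w
    have heq : (fderiv ℝ h) =ᶠ[nhds q] fun x => (-h x) • fderiv ℝ φ x := by
      filter_upwards [hU.mem_nhds hq] with x hx
      exact (hder x hx).fderiv
    have hφq := hφ.contDiffAt (hU.mem_nhds hq)
    have hf : HasFDerivAt (fderiv ℝ φ) (fderiv ℝ (fderiv ℝ φ) q) q := by
      have : ContDiffAt ℝ ((⊤:ℕ∞) : WithTop ℕ∞) (fderiv ℝ φ) q := hφq.fderiv_right (by exact_mod_cast le_refl _)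
      exact (this.differentiableAt (by simp)).hasFDerivAt
    have hc : HasFDerivAt (fun x => -h x) ((h q) • fderiv ℝ φ q) q := by
      have := (hder q hq).neg
      rw [neg_smul, neg_neg] at this
      exact this
    have hsm := hc.smul hf
    have hD : fderiv ℝ (fderiv ℝ h) q =
        (-h q) • fderiv ℝ (fderiv ℝ φ) q +
          ((h q) • fderiv ℝ φ q).smulRight (fderiv ℝ φ q) := by
      rw [heq.fderiv_eq]
      exact hsm.fderiv
    have hgrad : ∀ u : EuclideanSpace ℝ (Fin n),
        ⟪gradient φ q, u⟫ = fderiv ℝ φ q u := by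
      intro u
      simp [gradient, InnerProductSpace.toDual_symm_apply]
    have := hμ q hq v w
    rw [hgrad v, hgrad w] at this
    unfold Hess
    rw [hD]
    simp only [ContinuousLinearMap.add_apply, ContinuousLinearMap.smul_apply,
      ContinuousLinearMap.smulRight_apply, smul_eq_mul]
    unfold Hess at this
    rw [this]
    ring
  intro p hp v w
  have hlap : lap h p = (-(h p * μ p)) * n := by
    unfold lap
    have : ∀ i : Fin n, Hess h p (EuclideanSpace.single i 1) (EuclideanSpace.single i 1)
        = -(h p * μ p) := by
      intro i
      rw [key p hp]
      have : ⟪(EuclideanSpace.single i 1 : EuclideanSpace ℝ (Fin n)),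
          EuclideanSpace.single i 1⟫ = (1 : ℝ) := by
        simp [EuclideanSpace.inner_single_left]
      rw [this, mul_one]
    rw [Finset.sum_congr rfl fun i _ => this i]
    simp [mul_comm]
  rw [key p hp v w, hlap]
  have hn0 : (n : ℝ) ≠ 0 := Nat.cast_ne_zero.mpr (by omega)
  field_simp
end
end

section
/- Let V be a real vector space and let X : V × V → V be a symmetric ℝ-bilinear map such that for every v ∈ V the vector X(v, v) is a scalar multiple of v. Then there exists an ℝ-linear form ν : V → ℝ such that X(v, w) = ν(v)·w + ν(w)·v for all v, w ∈ V. -/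
/-- If a symmetric bilinear map `X : V × V → V` satisfies `X(v, v) ∝ v` for all `v`,
then `X(v, w) = ν(v)·w + ν(w)·v` for some linear form `ν`. -/
theorem symm_bilinear_proportional {V : Type*} [AddCommGroup V] [Module ℝ V]
    (X : V →ₗ[ℝ] V →ₗ[ℝ] V)
    (hsymm : ∀ v w : V, X v w = X w v)
    (hprop : ∀ v : V, ∃ c : ℝ, X v v = c • v) :
    ∃ ν : V →ₗ[ℝ] ℝ, ∀ v w : V, X v w = ν v • w + ν w • v := by
  classical
  set f : V → ℝ := fun v => if h : v = 0 then 0 else Classical.choose (hprop v) with hf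
  have hXf : ∀ v, X v v = f v • v := by
    intro v
    by_cases h : v = 0
    · simp [hf, h]
    · simp only [hf, dif_neg h]
      exact Classical.choose_spec (hprop v)
  have uniq : ∀ v : V, v ≠ 0 → ∀ a : ℝ, X v v = a • v → a = f v := by
    intro v hv a ha
    have h2 : (a - f v) • v = 0 := by rw [sub_smul, ← ha, ← hXf v, sub_self]
    rcases smul_eq_zero.mp h2 with h | h
    · linarith [sub_eq_zero.mp (by exact h)]
    · exact absurd h hv
  have hom : ∀ (t : ℝ) (v : V), f (t • v) = t * f v := by
    intro t v
    by_cases hv : v = 0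
    · simp [hv, hf]
    by_cases ht : t = 0
    · simp [ht, hf]
    have h1 : X (t • v) (t • v) = (t * f v) • (t • v) := by
      simp only [map_smul, LinearMap.smul_apply]
      rw [hXf v]; module
    exact (uniq (t • v) (smul_ne_zero ht hv) (t * f v) h1).symm
  have hmain : ∀ v w : V, X v w = (f v / 2) • w + (f w / 2) • v := by
    intro v w
    by_cases hv : v = 0
    · simp [hv, hf]
    by_cases hdep : ∃ t : ℝ, w = t • v
    · obtain ⟨t, rfl⟩ := hdep
      rw [map_smul, hXf v, hom t v]
      module
    -- independent case
    have hind : ∀ a b : ℝ, a • v + b • w = 0 → a = 0 ∧ b = 0 := by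
      intro a b hab
      by_cases hb : b = 0
      · refine ⟨?_, hb⟩
        rw [hb, zero_smul, add_zero] at hab
        rcases smul_eq_zero.mp hab with h | h
        · exact h
        · exact absurd h hv
      · exfalso
        apply hdep
        have h2 : b • w = (-a) • v := by linear_combination (norm := module) hab
        have h3 := congrArg (fun z => b⁻¹ • z) h2
        simp only [smul_smul, inv_mul_cancel₀ hb, one_smul] at h3
        exact ⟨b⁻¹ * -a, h3⟩
    have e1 : f (v + w) • (v + w) = f v • v + (2 : ℝ) • X v w + f w • w := by
      have expand : X (v + w) (v + w) = X v v + X v w + X w v + X w w := by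
        simp only [map_add, LinearMap.add_apply]; abel
      rw [← hXf, expand, hsymm w v, hXf v, hXf w]; module
    have e2 : f (v + (2:ℝ) • w) • (v + (2:ℝ) • w)
        = f v • v + (4 : ℝ) • X v w + (4 * f w) • w := by
      have expand : X (v + (2:ℝ) • w) (v + (2:ℝ) • w)
          = X v v + (2:ℝ) • X v w + (2:ℝ) • X w v + (4:ℝ) • X w w := by
        simp only [map_add, map_smul, LinearMap.add_apply, LinearMap.smul_apply,
          smul_smul]
        norm_num; module
      rw [← hXf, expand, hsymm w v, hXf v, hXf w]; module
    set a := f v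
    set b := f w
    set c1 := f (v + w)
    set c2 := f (v + (2:ℝ) • w)
    have key : (2 * c1 - a - c2 - (a - a)) • v + (2 * c1 - 2 * b - (2 * c2 - 4 * b)) • w = 0 := by
      linear_combination (norm := module) (2:ℝ) • e1 - e2
    obtain ⟨h1, h2⟩ := hind _ _ key
    have hc2 : c2 = c1 + b := by linarith
    have hc1 : c1 = a + b := by linarith
    have h4 : c1 • (v + w) = (a + b) • (v + w) := by rw [hc1]
    have e1' : (2 : ℝ) • X v w = b • v + a • w := by
      linear_combination (norm := module) h4 - e1
    linear_combination (norm := module) ((2:ℝ)⁻¹) • e1'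
  -- additivity of f
  have fadd : ∀ v w : V, f (v + w) = f v + f w := by
    intro v w
    by_cases hvw : v + w = 0
    · have hw : w = -v := by linear_combination (norm := module) hvw
      have hfw : f w = - f v := by rw [hw, ← neg_one_smul ℝ v, hom]; ring
      have h0 : f (0 : V) = 0 := by simp [hf]
      rw [hvw, h0, hfw]; ring
    · apply (uniq (v + w) hvw (f v + f w) ?_).symm
      have expand : X (v + w) (v + w) = X v v + (2:ℝ) • X v w + X w w := by
        simp only [map_add, LinearMap.add_apply]
        rw [hsymm w v]; module
      rw [expand, hXf v, hXf w, hmain v w]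
      module
  refine ⟨{ toFun := fun v => f v / 2,
            map_add' := by intro v w; simp [fadd]; ring,
            map_smul' := by intro t v; simp [hom]; ring }, ?_⟩
  intro v w
  rw [hmain v w]
  simp only [LinearMap.coe_mk, AddHom.coe_mk, RingHom.id_apply]
end
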